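/- For X ⊆ [2, n], the number of permutations in S_n whose descent top set equals X exactly is given by inclusion-exclusion: |R(n−1, X)| = Σ_{J ⊆ X} (−1)^{|X∖J|} α(J)!̂. -/

import Mathlib

open Finset

/-- Positions of descents of a permutation of `Fin (n+1)` in one-line notation. -/
def descSet (n : ℕ) (σ : Equiv.Perm (Fin (n+1))) : Finset (Fin n) :=
  Finset.univ.filter (fun i : Fin n => σ i.succ < σ i.castSucc)

/-- Number of descents. -/
def des (n : ℕ) (σ : Equiv.Perm (Fin (n+1))) : ℕ := (descSet n σ).card

/-- Descent top set, with values written 1-based (so `DT n σ ⊆ [2, n+1]`). -/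
def DT (n : ℕ) (σ : Equiv.Perm (Fin (n+1))) : Finset ℕ :=
  (descSet n σ).image (fun i => (σ i.castSucc : ℕ) + 1)

/-- `β!̂ = (k+1)^{β₁} k^{β₂} ⋯ 2^{β_k}` for a tuple `β` of length `k`. -/
def hatFac (β : List ℕ) : ℕ :=
  (β.zipIdx.map (fun p => (β.length + 1 - p.2) ^ p.1)).prod

/-- `α(X)!̂` where, for `X = {x₁ < … < x_k}`, `α(X) = (x₁ - 1, x₂ - x₁, …, x_k - x_{k-1})`. -/
def alphaHat (X : Finset ℕ) : ℕ :=
  hatFac (List.zipWith (fun a b => b - a) (1 :: X.sort (· ≤ ·)) (X.sort (· ≤ ·)))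

def chainProd : ℕ → List ℕ → ℕ
  | _, [] => 1
  | c, x :: xs => (xs.length + 2) ^ (x - c) * chainProd x xs

lemma prod_enumFrom_aux (l : List ℕ) : ∀ (k m : ℕ),
    (List.map (fun p => (m + 1 - p.2) ^ p.1) (List.zipIdx l (k+1))).prod
      = (List.map (fun p => (m - p.2) ^ p.1) (List.zipIdx l k)).prod := by
  induction l with
  | nil => intro k m; rfl
  | cons x t ih =>
    intro k m
    rw [List.zipIdx_cons, List.zipIdx_cons, List.map_cons, List.map_cons, List.prod_cons,
      List.prod_cons, ih (k+1) m]
    congr 2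
    omega

lemma hatFac_cons (b : ℕ) (l : List ℕ) : hatFac (b :: l) = (l.length + 2) ^ b * hatFac l := by
  unfold hatFac
  rw [List.zipIdx_cons]
  simp only [List.map_cons, List.map_map, List.prod_cons, List.length_cons, Nat.sub_zero]
  congr 1
  show (List.map (fun p => ((l.length + 1) + 1 - p.2) ^ p.1) (List.zipIdx l (0+1))).prod = _
  rw [prod_enumFrom_aux l 0 (l.length+1)]

lemma hatFac_zipWith (c : ℕ) (xs : List ℕ) :
    hatFac (List.zipWith (fun a b => b - a) (c :: xs) xs) = chainProd c xs := by
  induction xs generalizing c with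
  | nil => simp [hatFac, chainProd]
  | cons x t ih =>
    rw [List.zipWith_cons_cons, hatFac_cons, ih, chainProd]
    congr 2
    simp [List.length_zipWith]

lemma alphaHat_eq_chainProd (X : Finset ℕ) : alphaHat X = chainProd 1 (X.sort (· ≤ ·)) :=
  hatFac_zipWith 1 _

lemma chainProd_shift (c : ℕ) (l : List ℕ) (hl : ∀ y ∈ l, 1 ≤ y) :
    chainProd (c + 1) l = chainProd c (l.map (· - 1)) := by
  induction l generalizing c with
  | nil => rfl
  | cons x t ih =>
    have hx : 1 ≤ x := hl x List.mem_cons_self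
    have : x = (x - 1) + 1 := by omega
    rw [chainProd, List.map_cons, chainProd, List.length_map, this,
      ih (x-1) (fun y hy => hl y (List.mem_cons_of_mem _ hy))]
    congr 2
    omega
open Finset

lemma sort_image_pred (J : Finset ℕ) (hJ : ∀ x ∈ J, 2 ≤ x) :
    (J.image (· - 1)).sort (· ≤ ·) = (J.sort (· ≤ ·)).map (· - 1) := by
  refine (fun hp hs => List.Perm.eq_of_pairwise' (Finset.pairwise_sort _ _) hs hp) ?_ ?_
  · -- perm
    rw [← Multiset.coe_eq_coe]
    rw [Finset.sort_eq]
    have : (J.image (· - 1)).val = J.val.map (· - 1) := by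
      apply Finset.image_val_of_injOn
      intro a ha b hb hab
      have h1 := hJ a ha; have h2 := hJ b hb
      have hab' : a - 1 = b - 1 := hab
      omega
    rw [this, ← Finset.sort_eq J (· ≤ ·), Multiset.map_coe]
  · -- sorted
    have := (Finset.sortedLT_sort J).pairwise
    refine List.Pairwise.map _ ?_ this
    intro a b hab
    omega

lemma sort_erase (S : Finset ℕ) (a : ℕ) :
    (S.erase a).sort (· ≤ ·) = ((S.sort (· ≤ ·)).erase a) := by
  refine (fun hp hs => List.Perm.eq_of_pairwise' (Finset.pairwise_sort _ _) hs hp) ?_ ?_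
  · rw [← Multiset.coe_eq_coe, Finset.sort_eq, Finset.erase_val, ← Finset.sort_eq S (· ≤ ·),
      Multiset.coe_erase]
  · exact (Finset.pairwise_sort _ _).erase _

lemma alphaHat_step (J : Finset ℕ) (hJ : ∀ x ∈ J, 2 ≤ x) :
    alphaHat J = (J.card + 1) * alphaHat ((J.image (· - 1)).erase 1) := by
  rw [alphaHat_eq_chainProd, alphaHat_eq_chainProd, sort_erase, sort_image_pred J hJ,
    ← Finset.length_sort (α := ℕ) (· ≤ ·) (s := J)]
  have hsorted := (Finset.sortedLT_sort J).pairwise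
  have hmem : ∀ y ∈ J.sort (· ≤ ·), 2 ≤ y := fun y hy => hJ y ((Finset.mem_sort _).mp hy)
  cases h : J.sort (· ≤ ·) with
  | nil => simp [chainProd]
  | cons x t =>
    rw [h] at hsorted hmem
    have hx2 : 2 ≤ x := hmem x List.mem_cons_self
    have ht : ∀ y ∈ t, x < y := (List.pairwise_cons.mp hsorted).1
    have ht1 : ∀ y ∈ t, 1 ≤ y := fun y hy => by have := ht y hy; omega
    by_cases hx : x = 2
    · subst hx
      rw [List.map_cons]
      norm_num
      rw [chainProd, show (2:ℕ) - 1 = 1 from rfl, pow_one,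
        show chainProd 2 t = chainProd 1 (t.map (· - 1)) from chainProd_shift 1 t ht1]
    · have hx3 : 3 ≤ x := by omega
      rw [List.map_cons, List.erase_cons_tail (by simp; omega)]
      have h1 : (1:ℕ) ∉ t.map (· - 1) := by
        intro hmem1
        obtain ⟨y, hy, hy1⟩ := List.mem_map.mp hmem1
        have := ht y hy
        simp at hy1
        omega
      have key := chainProd_shift (x-1) t ht1
      rw [show x-1+1 = x from by omega] at key
      rw [List.erase_of_not_mem h1, chainProd, chainProd, List.length_map, List.length_cons,
        ← key, show x-1-1 = x-2 from by omega, show x-1 = x-2+1 from by omega, pow_succ]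
      ring

lemma mem_DT {n : ℕ} {τ : Equiv.Perm (Fin (n+1))} {a : ℕ} :
    a ∈ DT n τ ↔ ∃ i : Fin n, τ i.succ < τ i.castSucc ∧ (τ i.castSucc : ℕ) + 1 = a := by
  simp [DT, descSet]

def ext1 {n : ℕ} (p : Fin (n+2)) (τ : Equiv.Perm (Fin (n+1))) : Equiv.Perm (Fin (n+2)) :=
  (finSuccEquiv' p).trans ((τ.optionCongr).trans (finSuccEquiv' 0).symm)

variable {n : ℕ} (p : Fin (n+2)) (τ : Equiv.Perm (Fin (n+1)))

lemma ext1_apply_self : ext1 p τ p = 0 := by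
  simp [ext1, finSuccEquiv'_at, finSuccEquiv'_symm_none]

lemma ext1_apply_succAbove (i : Fin (n+1)) : ext1 p τ (p.succAbove i) = (τ i).succ := by
  simp [ext1, finSuccEquiv'_succAbove, finSuccEquiv'_symm_some, Fin.zero_succAbove]

lemma ext1_castSucc_lt {i : Fin (n+1)} (h : (i:ℕ) < (p:ℕ)) :
    ext1 p τ i.castSucc = (τ i).succ := by
  rw [← Fin.succAbove_of_castSucc_lt p i (by rwa [Fin.lt_def, Fin.coe_castSucc]),
    ext1_apply_succAbove]

lemma ext1_castSucc_eq {i : Fin (n+1)} (h : (i:ℕ) = (p:ℕ)) :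
    ext1 p τ i.castSucc = 0 := by
  have : i.castSucc = p := Fin.ext (by simpa using h)
  rw [this, ext1_apply_self]

lemma ext1_castSucc_gt {i : Fin (n+1)} (h : (p:ℕ) < (i:ℕ)) :
    ext1 p τ i.castSucc = (τ ⟨(i:ℕ) - 1, by omega⟩).succ := by
  have h2 : p.succAbove ⟨(i:ℕ) - 1, by omega⟩ = i.castSucc := by
    rw [Fin.succAbove_of_le_castSucc p _ (by simp [Fin.le_def]; omega)]
    apply Fin.ext
    simp
    omega
  rw [← h2, ext1_apply_succAbove]

lemma ext1_succ_ge {i : Fin (n+1)} (h : (p:ℕ) ≤ (i:ℕ)) :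
    ext1 p τ i.succ = (τ i).succ := by
  rw [← Fin.succAbove_of_le_castSucc p i (by simp [Fin.le_def]; omega), ext1_apply_succAbove]

lemma ext1_succ_eq {i : Fin (n+1)} (h : (i:ℕ) + 1 = (p:ℕ)) :
    ext1 p τ i.succ = 0 := by
  have : i.succ = p := Fin.ext (by simpa using h)
  rw [this, ext1_apply_self]

lemma ext1_succ_lt {i : Fin (n+1)} (h : (i:ℕ) + 1 < (p:ℕ)) :
    ext1 p τ i.succ = (τ ⟨(i:ℕ) + 1, by omega⟩).succ := by
  have h2 : p.succAbove ⟨(i:ℕ) + 1, by omega⟩ = i.succ := by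
    rw [Fin.succAbove_of_castSucc_lt p _ (by simp [Fin.lt_def]; omega)]
    apply Fin.ext
    simp
  rw [← h2, ext1_apply_succAbove]

lemma DT_ext1_subset_iff (J : Finset ℕ) :
    DT (n+1) (ext1 p τ) ⊆ J ↔
      ((∀ b ∈ DT n τ, b + 1 ∈ J) ∧
        ∀ i : Fin (n+1), (i:ℕ) + 1 = (p:ℕ) → (τ i : ℕ) + 2 ∈ J) := by
  constructor
  · intro h
    constructor
    · intro b hb
      obtain ⟨d, hd, hdb⟩ := mem_DT.mp hb
      have hgoal : ((τ d.castSucc : ℕ) + 1) + 1 ∈ J := by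
        rcases lt_trichotomy ((d:ℕ) + 1) (p:ℕ) with hc | hc | hc
        · -- both positions left of p
          have hmem : ((ext1 p τ) (d.castSucc : Fin (n+1)).castSucc : ℕ) + 1 ∈ DT (n+1) (ext1 p τ) := by
            refine mem_DT.mpr ⟨d.castSucc, ?_, rfl⟩
            rw [ext1_succ_lt p τ (by simpa using hc),
              ext1_castSucc_lt p τ (by simp; omega)]
            have : (⟨((d.castSucc : Fin (n+1)):ℕ) + 1, by simp only [Fin.coe_castSucc]; omega⟩ : Fin (n+1)) = d.succ := by
              apply Fin.ext; simp
            rw [this]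
            exact Fin.succ_lt_succ_iff.mpr hd
          have := h hmem
          rwa [ext1_castSucc_lt p τ (by simp; omega), Fin.val_succ] at this
        · have hmem : ((ext1 p τ) (d.castSucc : Fin (n+1)).castSucc : ℕ) + 1 ∈ DT (n+1) (ext1 p τ) := by
            refine mem_DT.mpr ⟨d.castSucc, ?_, rfl⟩
            rw [ext1_succ_eq p τ (by simpa using hc),
              ext1_castSucc_lt p τ (by simp; omega)]
            exact Fin.succ_pos _
          have := h hmem
          rwa [ext1_castSucc_lt p τ (by simp; omega), Fin.val_succ] at this
        · -- both positions right of p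
          have hmem : ((ext1 p τ) (d.succ : Fin (n+1)).castSucc : ℕ) + 1 ∈ DT (n+1) (ext1 p τ) := by
            refine mem_DT.mpr ⟨d.succ, ?_, rfl⟩
            rw [ext1_succ_ge p τ (by simp; omega),
              ext1_castSucc_gt p τ (by simp; omega)]
            have : (⟨((d.succ : Fin (n+1)):ℕ) - 1, by omega⟩ : Fin (n+1)) = d.castSucc := by
              apply Fin.ext; simp
            rw [this]
            exact Fin.succ_lt_succ_iff.mpr hd
          have := h hmem
          rw [ext1_castSucc_gt p τ (by simp; omega)] at this
          have e : (⟨((d.succ : Fin (n+1)):ℕ) - 1, by omega⟩ : Fin (n+1)) = d.castSucc := by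
            apply Fin.ext; simp
          rwa [e, Fin.val_succ] at this
      rwa [hdb] at hgoal
    · intro i hip
      have hmem : ((ext1 p τ) i.castSucc : ℕ) + 1 ∈ DT (n+1) (ext1 p τ) := by
        refine mem_DT.mpr ⟨i, ?_, rfl⟩
        rw [ext1_succ_eq p τ hip, ext1_castSucc_lt p τ (by omega)]
        exact Fin.succ_pos _
      have := h hmem
      rwa [ext1_castSucc_lt p τ (by omega), Fin.val_succ] at this
  · rintro ⟨h1, h2⟩ a ha
    obtain ⟨i, hd, rfl⟩ := mem_DT.mp ha
    rcases lt_trichotomy ((i:ℕ) + 1) (p:ℕ) with hc | hc | hc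
    · -- descent of τ at position i
      rw [ext1_succ_lt p τ hc, ext1_castSucc_lt p τ (by omega)] at hd
      have hin : (i:ℕ) < n := by omega
      have hb : (τ i : ℕ) + 1 ∈ DT n τ := by
        refine mem_DT.mpr ⟨⟨(i:ℕ), hin⟩, ?_, ?_⟩
        · have e1 : (⟨(i:ℕ), hin⟩ : Fin n).succ = ⟨(i:ℕ) + 1, by omega⟩ := by
            apply Fin.ext; simp
          have e2 : (⟨(i:ℕ), hin⟩ : Fin n).castSucc = i := by
            apply Fin.ext; simp
          rw [e1, e2]
          exact Fin.succ_lt_succ_iff.mp hd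
        · have e2 : (⟨(i:ℕ), hin⟩ : Fin n).castSucc = i := by
            apply Fin.ext; simp
          rw [e2]
      have := h1 _ hb
      rwa [ext1_castSucc_lt p τ (by omega), Fin.val_succ]
    · rw [ext1_castSucc_lt p τ (by omega)]
      rw [Fin.val_succ]
      exact h2 i hc
    · rcases Nat.lt_or_ge (p:ℕ) (i:ℕ) with hc2 | hc2
      · -- descent of τ at position i-1
        rw [ext1_succ_ge p τ (by omega), ext1_castSucc_gt p τ hc2] at hd
        have hin : (i:ℕ) - 1 < n := by omega
        have hb : (τ ⟨(i:ℕ) - 1, by omega⟩ : ℕ) + 1 ∈ DT n τ := by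
          refine mem_DT.mpr ⟨⟨(i:ℕ) - 1, hin⟩, ?_, ?_⟩
          · have e1 : (⟨(i:ℕ) - 1, hin⟩ : Fin n).succ = i := by
              apply Fin.ext; simp; omega
            have e2 : (⟨(i:ℕ) - 1, hin⟩ : Fin n).castSucc = ⟨(i:ℕ) - 1, by omega⟩ := by
              apply Fin.ext; simp
            rw [e1, e2]
            exact Fin.succ_lt_succ_iff.mp hd
          · have e2 : (⟨(i:ℕ) - 1, hin⟩ : Fin n).castSucc = ⟨(i:ℕ) - 1, by omega⟩ := by
              apply Fin.ext; simp
            rw [e2]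
        have := h1 _ hb
        rwa [ext1_castSucc_gt p τ hc2, Fin.val_succ]
      · -- i = p : impossible
        exfalso
        have hip : (i:ℕ) = (p:ℕ) := by omega
        rw [ext1_succ_ge p τ (by omega), ext1_castSucc_eq p τ hip] at hd
        exact absurd hd (by simp)

lemma DT_subset_Icc (m : ℕ) (σ : Equiv.Perm (Fin (m+1))) : DT m σ ⊆ Finset.Icc 2 (m+1) := by
  intro a ha
  obtain ⟨i, hd, rfl⟩ := mem_DT.mp ha
  have h1 : (σ i.succ : ℕ) < (σ i.castSucc : ℕ) := hd
  have h2 : (σ i.castSucc : ℕ) < m + 1 := (σ i.castSucc).isLt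
  rw [Finset.mem_Icc]
  omega

lemma ext1_inj {p p' : Fin (n+2)} {τ τ' : Equiv.Perm (Fin (n+1))}
    (h : ext1 p τ = ext1 p' τ') : p = p' ∧ τ = τ' := by
  have hp : p = p' := by
    apply (ext1 p τ).injective
    rw [ext1_apply_self, h, ext1_apply_self]
  subst hp
  refine ⟨rfl, ?_⟩
  apply Equiv.ext
  intro i
  have := congrArg (fun σ : Equiv.Perm (Fin (n+2)) => σ (p.succAbove i)) h
  simp only [ext1_apply_succAbove] at this
  exact Fin.succ_injective _ this

lemma ext1_surj (σ : Equiv.Perm (Fin (n+2))) : ∃ p τ, ext1 p τ = σ := by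
  set p := σ⁻¹ 0 with hp
  set e : Option (Fin (n+1)) ≃ Option (Fin (n+1)) :=
    ((finSuccEquiv' p).symm.trans σ).trans (finSuccEquiv' 0) with he
  have hnone : e none = none := by
    simp only [he, Equiv.trans_apply, finSuccEquiv'_symm_none, hp,
      Equiv.Perm.inv_def, Equiv.apply_symm_apply]
    exact finSuccEquiv'_at 0
  refine ⟨p, Equiv.removeNone e, ?_⟩
  apply Equiv.ext
  intro x
  rcases eq_or_ne x p with rfl | hx
  · rw [ext1_apply_self, hp, Equiv.Perm.inv_def, Equiv.apply_symm_apply]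
  · obtain ⟨i, rfl⟩ := Fin.exists_succAbove_eq hx
    rw [ext1_apply_succAbove]
    have hsome : ∃ x', e (some i) = some x' := by
      rcases h : e (some i) with _ | x'
      · exact absurd (e.injective (h.trans hnone.symm)) (by simp)
      · exact ⟨x', rfl⟩
    have h1 : some (Equiv.removeNone e i) = e (some i) := Equiv.removeNone_some e hsome
    have h2 : e (some i) = finSuccEquiv' 0 (σ (p.succAbove i)) := by
      simp [he, finSuccEquiv'_symm_some]
    rw [h2] at h1
    have := congrArg (finSuccEquiv' 0).symm h1
    rw [Equiv.symm_apply_apply, finSuccEquiv'_symm_some, Fin.zero_succAbove] at this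
    exact this

lemma card_filter_val (J : Finset ℕ) (hJ : J ⊆ Finset.Icc 2 (n+2)) :
    (univ.filter (fun v : Fin (n+1) => (v:ℕ) + 2 ∈ J)).card = J.card := by
  refine Finset.card_bij (fun v _ => (v:ℕ) + 2) ?_ ?_ ?_
  · intro v hv; exact (Finset.mem_filter.mp hv).2
  · intro a ha b hb hab
    have hab' : (a:ℕ) + 2 = (b:ℕ) + 2 := hab
    exact Fin.ext (by omega)
  · intro a ha
    have := Finset.mem_Icc.mp (hJ ha)
    refine ⟨⟨a - 2, by omega⟩, Finset.mem_filter.mpr ⟨Finset.mem_univ _, ?_⟩, by simp; omega⟩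
    simp only []
    rw [show (a:ℕ) - 2 + 2 = a from by omega]
    exact ha

lemma card_filter_p (τ : Equiv.Perm (Fin (n+1))) (J : Finset ℕ) (hJ : J ⊆ Finset.Icc 2 (n+2)) :
    (univ.filter (fun p : Fin (n+2) =>
      ∀ i : Fin (n+1), (i:ℕ) + 1 = (p:ℕ) → (τ i : ℕ) + 2 ∈ J)).card = J.card + 1 := by
  have hset : (univ.filter (fun p : Fin (n+2) =>
      ∀ i : Fin (n+1), (i:ℕ) + 1 = (p:ℕ) → (τ i : ℕ) + 2 ∈ J))
      = insert 0 ((univ.filter (fun i : Fin (n+1) => (τ i : ℕ) + 2 ∈ J)).image Fin.succ) := by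
    ext p
    simp only [Finset.mem_filter, Finset.mem_univ, true_and, Finset.mem_insert,
      Finset.mem_image]
    constructor
    · intro hp
      rcases eq_or_ne p 0 with rfl | hp0
      · exact Or.inl rfl
      · refine Or.inr ⟨⟨(p:ℕ) - 1, by have := p.isLt; have : (p:ℕ) ≠ 0 := fun h => hp0 (Fin.ext (by simp [h])); omega⟩, ⟨?_, ?_⟩⟩
        · exact hp _ (by simp; have : (p:ℕ) ≠ 0 := fun h => hp0 (Fin.ext (by simp [h])); omega)
        · apply Fin.ext
          simp
          have : (p:ℕ) ≠ 0 := fun h => hp0 (Fin.ext (by simp [h]))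
          omega
    · rintro (rfl | ⟨i, hi, rfl⟩)
      · intro i hi; simp at hi
      · intro i' hi'
        have : i' = i := Fin.ext (by simpa using hi')
        rwa [this]
  rw [hset, Finset.card_insert_of_notMem, Finset.card_image_of_injective _ (Fin.succ_injective _)]
  · have : (univ.filter (fun i : Fin (n+1) => (τ i : ℕ) + 2 ∈ J)).card
        = (univ.filter (fun v : Fin (n+1) => (v:ℕ) + 2 ∈ J)).card := by
      refine Finset.card_bij (fun i _ => τ i) ?_ ?_ ?_
      · intro a ha
        exact Finset.mem_filter.mpr ⟨Finset.mem_univ _, (Finset.mem_filter.mp ha).2⟩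
      · intro a _ b _ hab; exact τ.injective hab
      · intro b hb
        refine ⟨τ.symm b, ?_, by simp⟩
        refine Finset.mem_filter.mpr ⟨Finset.mem_univ _, ?_⟩
        have := (Finset.mem_filter.mp hb).2
        simpa using this
    rw [this, card_filter_val J hJ]
  · simp only [Finset.mem_image]
    rintro ⟨i, _, hi⟩
    exact Fin.succ_ne_zero i hi

lemma A_succ (J : Finset ℕ) (hJ : J ⊆ Finset.Icc 2 (n+2)) :
    (univ.filter (fun σ : Equiv.Perm (Fin (n+2)) => DT (n+1) σ ⊆ J)).card
      = (J.card + 1) *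
        (univ.filter (fun τ : Equiv.Perm (Fin (n+1)) => ∀ b ∈ DT n τ, b + 1 ∈ J)).card := by
  classical
  set S : Finset (Fin (n+2) × Equiv.Perm (Fin (n+1))) :=
    univ.filter (fun x => (∀ b ∈ DT n x.2, b + 1 ∈ J) ∧
      ∀ i : Fin (n+1), (i:ℕ) + 1 = (x.1:ℕ) → (x.2 i : ℕ) + 2 ∈ J) with hS
  have h1 : S.card = (univ.filter (fun σ : Equiv.Perm (Fin (n+2)) => DT (n+1) σ ⊆ J)).card := by
    refine Finset.card_bij (fun x _ => ext1 x.1 x.2) ?_ ?_ ?_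
    · intro x hx
      obtain ⟨-, hx2⟩ := Finset.mem_filter.mp hx
      exact Finset.mem_filter.mpr ⟨Finset.mem_univ _, (DT_ext1_subset_iff x.1 x.2 J).mpr hx2⟩
    · intro a _ b _ hab
      obtain ⟨h1, h2⟩ := ext1_inj hab
      exact Prod.ext h1 h2
    · intro σ hσ
      obtain ⟨p, τ, hpτ⟩ := ext1_surj σ
      refine ⟨(p, τ), Finset.mem_filter.mpr ⟨Finset.mem_univ _, ?_⟩, hpτ⟩
      apply (DT_ext1_subset_iff p τ J).mp
      rw [hpτ]
      exact (Finset.mem_filter.mp hσ).2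
  rw [← h1]
  have h2 : S.card = ∑ τ ∈ univ.filter (fun τ : Equiv.Perm (Fin (n+1)) =>
      ∀ b ∈ DT n τ, b + 1 ∈ J), (J.card + 1) := by
    rw [Finset.card_eq_sum_card_fiberwise
      (f := Prod.snd)
      (t := univ.filter (fun τ : Equiv.Perm (Fin (n+1)) => ∀ b ∈ DT n τ, b + 1 ∈ J))
      (fun x hx => Finset.mem_filter.mpr ⟨Finset.mem_univ _, ((Finset.mem_filter.mp hx).2).1⟩)]
    apply Finset.sum_congr rfl
    intro τ hτ
    have hτ2 := (Finset.mem_filter.mp hτ).2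
    rw [← card_filter_p τ J hJ]
    refine Finset.card_bij (fun x _ => x.1) ?_ ?_ ?_
    · intro x hx
      obtain ⟨hx1, hx2⟩ := Finset.mem_filter.mp hx
      obtain ⟨-, -, hx3⟩ := Finset.mem_filter.mp hx1
      refine Finset.mem_filter.mpr ⟨Finset.mem_univ _, ?_⟩
      rwa [hx2] at hx3
    · intro a ha b hb hab
      have ha2 := (Finset.mem_filter.mp ha).2
      have hb2 := (Finset.mem_filter.mp hb).2
      exact Prod.ext hab (ha2.trans hb2.symm)
    · intro p hp
      refine ⟨(p, τ), ?_, rfl⟩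
      refine Finset.mem_filter.mpr ⟨Finset.mem_filter.mpr ⟨Finset.mem_univ _, hτ2, ?_⟩, rfl⟩
      exact (Finset.mem_filter.mp hp).2
  rw [h2, Finset.sum_const, smul_eq_mul, Nat.mul_comm]

lemma sum_neg_one_pow_sdiff (X I : Finset ℕ) (hI : I ⊆ X) :
    ∑ J ∈ X.powerset.filter (fun J => I ⊆ J), (-1:ℤ) ^ ((X \ J).card)
      = if I = X then 1 else 0 := by
  classical
  have hbij : ∑ J ∈ X.powerset.filter (fun J => I ⊆ J), (-1:ℤ) ^ ((X \ J).card)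
      = ∑ K ∈ (X \ I).powerset, (-1:ℤ) ^ (((X \ I) \ K).card) := by
    refine Finset.sum_bij' (fun J (_ : J ∈ X.powerset.filter (fun J => I ⊆ J)) => J \ I)
      (fun K (_ : K ∈ (X \ I).powerset) => I ∪ K) ?_ ?_ ?_ ?_ ?_
    · intro J hJ
      obtain ⟨hJ1, hJ2⟩ := Finset.mem_filter.mp hJ
      have hJX := Finset.mem_powerset.mp hJ1
      refine Finset.mem_powerset.mpr (fun x hx => ?_)
      rw [Finset.mem_sdiff] at hx ⊢
      exact ⟨hJX hx.1, hx.2⟩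
    · intro K hK
      have hK' := Finset.mem_powerset.mp hK
      refine Finset.mem_filter.mpr ⟨Finset.mem_powerset.mpr ?_, Finset.subset_union_left⟩
      exact Finset.union_subset hI (hK'.trans Finset.sdiff_subset)
    · intro J hJ
      exact Finset.union_sdiff_of_subset (Finset.mem_filter.mp hJ).2
    · intro K hK
      have hdisj : Disjoint I K :=
        Finset.disjoint_of_subset_right (Finset.mem_powerset.mp hK) Finset.disjoint_sdiff
      exact Finset.union_sdiff_cancel_left hdisj
    · intro J hJ
      obtain ⟨hJ1, hJ2⟩ := Finset.mem_filter.mp hJ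
      congr 2
      ext x
      simp only [Finset.mem_sdiff]
      constructor
      · rintro ⟨hx1, hx2⟩
        exact ⟨⟨hx1, fun h => hx2 (hJ2 h)⟩, fun h => hx2 h.1⟩
      · rintro ⟨⟨hx1, hx2⟩, hx3⟩
        refine ⟨hx1, fun h => hx3 ⟨h, hx2⟩⟩
  rw [hbij]
  have hterm : ∀ K ∈ (X \ I).powerset,
      (-1:ℤ) ^ (((X \ I) \ K).card) = (-1:ℤ) ^ ((X \ I).card) * (-1:ℤ) ^ K.card := by
    intro K hK
    have hK' := Finset.mem_powerset.mp hK
    have hc : ((X \ I) \ K).card = (X \ I).card - K.card := Finset.card_sdiff_of_subset hK'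
    have hle : K.card ≤ (X \ I).card := Finset.card_le_card hK'
    rw [hc, ← pow_add]
    have : (X \ I).card - K.card = ((X \ I).card + K.card) - 2 * K.card := by omega
    rw [show (X \ I).card + K.card = ((X \ I).card - K.card) + 2 * K.card from by omega,
      pow_add, pow_mul]
    simp
  rw [Finset.sum_congr rfl hterm, ← Finset.mul_sum, Finset.sum_powerset_neg_one_pow_card]
  by_cases h : I = X
  · subst h
    simp
  · have : X \ I ≠ ∅ := by
      intro hc
      exact h (Finset.eq_of_subset_of_card_le hI (by
        have := Finset.card_sdiff_of_subset hI
        rw [hc] at this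
        simp at this
        omega))
    simp [this, h]

lemma card_subset_eq_sum (m : ℕ) (J : Finset ℕ) :
    (univ.filter (fun σ : Equiv.Perm (Fin (m+1)) => DT m σ ⊆ J)).card
      = ∑ I ∈ J.powerset, (univ.filter (fun σ : Equiv.Perm (Fin (m+1)) => DT m σ = I)).card := by
  rw [Finset.card_eq_sum_card_fiberwise (f := fun σ => DT m σ) (t := J.powerset)
    (fun σ hσ => Finset.mem_powerset.mpr (Finset.mem_filter.mp hσ).2)]
  apply Finset.sum_congr rfl
  intro I hI
  congr 1
  ext σ
  simp only [Finset.mem_filter, Finset.mem_univ, true_and]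
  constructor
  · rintro ⟨h1, h2⟩; exact h2
  · intro h; exact ⟨h ▸ Finset.mem_powerset.mp hI, h⟩

lemma A_eq_alphaHat : ∀ (m : ℕ) (J : Finset ℕ), J ⊆ Finset.Icc 2 (m+1) →
    (univ.filter (fun σ : Equiv.Perm (Fin (m+1)) => DT m σ ⊆ J)).card = alphaHat J := by
  intro m
  induction m with
  | zero =>
    intro J hJ
    have hJ0 : J = ∅ := by
      rw [Finset.eq_empty_iff_forall_notMem]
      intro x hx
      have := Finset.mem_Icc.mp (hJ hx)
      omega
    subst hJ0
    have hDT : ∀ σ : Equiv.Perm (Fin 1), DT 0 σ ⊆ ∅ := by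
      intro σ
      simp [DT, descSet]
    rw [Finset.filter_true_of_mem (fun σ _ => hDT σ), Finset.card_univ]
    rw [show alphaHat ∅ = 1 from by rw [alphaHat_eq_chainProd, Finset.sort_empty]; rfl]
    simp
  | succ m ih =>
    intro J hJ
    have hJ2 : ∀ x ∈ J, 2 ≤ x := fun x hx => (Finset.mem_Icc.mp (hJ hx)).1
    rw [A_succ J hJ]
    set J' := (J.image (· - 1)).erase 1 with hJ'
    have hfilter : (univ.filter (fun τ : Equiv.Perm (Fin (m+1)) => ∀ b ∈ DT m τ, b + 1 ∈ J))
        = univ.filter (fun τ => DT m τ ⊆ J') := by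
      apply Finset.filter_congr
      intro τ _
      constructor
      · intro h b hb
        have hb2 : 2 ≤ b := (Finset.mem_Icc.mp (DT_subset_Icc m τ hb)).1
        refine Finset.mem_erase.mpr ⟨by omega, Finset.mem_image.mpr ⟨b + 1, h b hb, by omega⟩⟩
      · intro h b hb
        obtain ⟨hb1, hb2⟩ := Finset.mem_erase.mp (h hb)
        obtain ⟨x, hx, hxb⟩ := Finset.mem_image.mp hb2
        have := hJ2 x hx
        have : x = b + 1 := by omega
        rwa [← this]
    rw [hfilter, ih J' ?_, ← alphaHat_step J hJ2]
    intro x hx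
    obtain ⟨hx1, hx2⟩ := Finset.mem_erase.mp hx
    obtain ⟨y, hy, hyx⟩ := Finset.mem_image.mp hx2
    have h1 := Finset.mem_Icc.mp (hJ hy)
    rw [Finset.mem_Icc]
    omega

/-- Inclusion–exclusion formula for the number of permutations whose descent top set is
exactly `X`. -/
theorem card_DT_eq (n : ℕ) (X : Finset ℕ) (hX : X ⊆ Finset.Icc 2 (n+1)) :
    ((Finset.univ.filter (fun σ : Equiv.Perm (Fin (n+1)) => DT n σ = X)).card : ℤ) =
      ∑ J ∈ X.powerset, (-1 : ℤ) ^ ((X \ J).card) * alphaHat J := by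
  classical
  have hmob : (∑ J ∈ X.powerset, (-1:ℤ) ^ ((X \ J).card) *
      ((univ.filter (fun σ : Equiv.Perm (Fin (n+1)) => DT n σ ⊆ J)).card : ℤ))
      = ((univ.filter (fun σ : Equiv.Perm (Fin (n+1)) => DT n σ = X)).card : ℤ) := by
    have expand : ∀ J : Finset ℕ,
        ((univ.filter (fun σ : Equiv.Perm (Fin (n+1)) => DT n σ ⊆ J)).card : ℤ)
          = ∑ I ∈ J.powerset,
              ((univ.filter (fun σ : Equiv.Perm (Fin (n+1)) => DT n σ = I)).card : ℤ) := by
      intro J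
      rw [card_subset_eq_sum n J]
      push_cast
      rfl
    calc
      (∑ J ∈ X.powerset, (-1:ℤ) ^ ((X \ J).card) *
          ((univ.filter (fun σ : Equiv.Perm (Fin (n+1)) => DT n σ ⊆ J)).card : ℤ))
        = ∑ J ∈ X.powerset, ∑ I ∈ J.powerset, (-1:ℤ) ^ ((X \ J).card) *
            ((univ.filter (fun σ : Equiv.Perm (Fin (n+1)) => DT n σ = I)).card : ℤ) := by
          apply Finset.sum_congr rfl
          intro J _
          rw [expand J, Finset.mul_sum]
      _ = ∑ I ∈ X.powerset, ∑ J ∈ X.powerset.filter (fun J => I ⊆ J),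
            (-1:ℤ) ^ ((X \ J).card) *
            ((univ.filter (fun σ : Equiv.Perm (Fin (n+1)) => DT n σ = I)).card : ℤ) := by
          apply Finset.sum_comm'
          intro J I
          simp only [Finset.mem_powerset, Finset.mem_filter]
          constructor
          · rintro ⟨h1, h2⟩
            exact ⟨⟨h1, h2⟩, h2.trans h1⟩
          · rintro ⟨⟨h1, h2⟩, h3⟩
            exact ⟨h1, h2⟩
      _ = ∑ I ∈ X.powerset, (if I = X then (1:ℤ) else 0) *
            ((univ.filter (fun σ : Equiv.Perm (Fin (n+1)) => DT n σ = I)).card : ℤ) := by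
          apply Finset.sum_congr rfl
          intro I hI
          rw [← Finset.sum_mul, sum_neg_one_pow_sdiff X I (Finset.mem_powerset.mp hI)]
      _ = ((univ.filter (fun σ : Equiv.Perm (Fin (n+1)) => DT n σ = X)).card : ℤ) := by
          rw [Finset.sum_eq_single_of_mem X (Finset.mem_powerset_self X)]
          · rw [if_pos rfl, one_mul]
          · intro I _ hIX
            rw [if_neg hIX, zero_mul]
  rw [← hmob]
  apply Finset.sum_congr rfl
  intro J hJ
  rw [A_eq_alphaHat n J ((Finset.mem_powerset.mp hJ).trans hX)]
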